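/- arXiv:1711.07670 — 2 statements merged into one kernel-verified Lean document; each statement's English description precedes it below -/
import Mathlib

section
/- Let Y be a topological space, X ⊆ Y a subspace, and x₀ ∈ X. Suppose: (i) for every k ≥ 0 and every continuous map φ : Sᵏ → Y with φ(b) = x₀ (b the basepoint of Sᵏ) there exists a continuous homotopy H : Sᵏ × [0,1] → Y with H(·,0) = φ, H(b,t) = x₀ for all t, and H(·,1)(Sᵏ) ⊆ X; and (ii) for every k ≥ 0 and every continuous map Φ : Sᵏ × [0,1] → Y with Φ(s,0), Φ(s,1) ∈ X for all s ∈ Sᵏ and Φ(b,t) = x₀ for all t, there exists a continuous homotopy G : (Sᵏ × [0,1]) × [0,1] → Y with G(·,0) = Φ, G(x,u) = Φ(x) for all u whenever x ∈ Sᵏ × {0,1} ∪ {b} × [0,1], and G(·,1)(Sᵏ × [0,1]) ⊆ X. Then for every k ≥ 0 the inclusion X ↪ Y induces a bijection on homotopy groups πₖ(X, x₀) → πₖ(Y, x₀). -/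
open unitInterval

noncomputable section

/-- The `k`-dimensional sphere `Sᵏ`, as a subspace of `ℝ^{k+1}`. -/
abbrev Sph (k : ℕ) : Set (EuclideanSpace ℝ (Fin (k + 1))) :=
  Metric.sphere (0 : EuclideanSpace ℝ (Fin (k + 1))) 1

/-- The basepoint `b` of the `k`-sphere. -/
def basept (k : ℕ) : Sph k :=
  ⟨EuclideanSpace.single (0 : Fin (k + 1)) (1 : ℝ), by
    simp [mem_sphere_zero_iff_norm, EuclideanSpace.norm_single]⟩

/-- Based continuous maps from the `k`-sphere to a pointed space `(Z, z)`. -/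
def BasedMap (k : ℕ) (Z : Type*) [TopologicalSpace Z] (z : Z) :=
  { f : C(↥(Sph k), Z) // f (basept k) = z }

/-- Based maps from the `k`-sphere, up to homotopy relative to the basepoint. -/
def basedSetoid (k : ℕ) (Z : Type*) [TopologicalSpace Z] (z : Z) :
    Setoid (BasedMap k Z z) :=
  ⟨fun f g => ContinuousMap.HomotopicRel f.1 g.1 {basept k},
    ⟨fun f => ContinuousMap.HomotopicRel.refl f.1,
     fun h => h.symm, fun h h' => h.trans h'⟩⟩

/-- The `k`-th homotopy group `πₖ(Z, z)` as a set: based maps from the `k`-sphere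
modulo based homotopy. -/
def homotopyClasses (k : ℕ) (Z : Type*) [TopologicalSpace Z] (z : Z) :=
  Quotient (basedSetoid k Z z)

/-- The map `πₖ(X, x₀) → πₖ(Y, x₀)` induced by the inclusion of a subspace `X ⊆ Y`. -/
def inducedMap (k : ℕ) {Y : Type*} [TopologicalSpace Y] (X : Set Y) (x₀ : Y)
    (hx₀ : x₀ ∈ X) :
    homotopyClasses k X ⟨x₀, hx₀⟩ → homotopyClasses k Y x₀ :=
  Quotient.map' (s₁ := basedSetoid k X ⟨x₀, hx₀⟩) (s₂ := basedSetoid k Y x₀)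
    (fun f => ⟨(⟨Subtype.val, continuous_subtype_val⟩ : C(↥X, Y)).comp f.1,
      by simp [ContinuousMap.comp_apply, f.2]⟩)
    (fun f g h => h.elim fun H =>
      ⟨H.compContinuousMap (⟨Subtype.val, continuous_subtype_val⟩ : C(↥X, Y))⟩)

/-- If the pair `(Y, X)` satisfies the formal h-principle (for a sphere with basepoint,
and for a sphere-cylinder relative to its ends and the basepoint line), then the
inclusion `X ↪ Y` induces a bijection on all homotopy groups. -/
theorem formal_h_principle_inclusion_pi_bijective
    {Y : Type*} [TopologicalSpace Y] (X : Set Y) (x₀ : Y) (hx₀ : x₀ ∈ X)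
    (hyp₁ : ∀ (k : ℕ) (φ : ↥(Sph k) → Y), Continuous φ → φ (basept k) = x₀ →
      ∃ H : ↥(Sph k) × I → Y, Continuous H ∧
        (∀ s, H (s, 0) = φ s) ∧
        (∀ t, H (basept k, t) = x₀) ∧
        (∀ s, H (s, 1) ∈ X))
    (hyp₂ : ∀ (k : ℕ) (Φ : ↥(Sph k) × I → Y), Continuous Φ →
      (∀ s, Φ (s, 0) ∈ X) → (∀ s, Φ (s, 1) ∈ X) → (∀ t, Φ (basept k, t) = x₀) →
      ∃ G : (↥(Sph k) × I) × I → Y, Continuous G ∧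
        (∀ x, G (x, 0) = Φ x) ∧
        (∀ (s : ↥(Sph k)) (t u : I), (t = 0 ∨ t = 1 ∨ s = basept k) →
          G ((s, t), u) = Φ (s, t)) ∧
        (∀ x, G (x, 1) ∈ X)) :
    ∀ k : ℕ, Function.Bijective (inducedMap k X x₀ hx₀) := by
  intro k
  letI sX : Setoid (BasedMap k X ⟨x₀, hx₀⟩) := basedSetoid k X ⟨x₀, hx₀⟩
  letI sY : Setoid (BasedMap k Y x₀) := basedSetoid k Y x₀
  constructor
  · -- injectivity
    intro a b hab
    induction a using Quotient.inductionOn' with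
    | h f =>
    induction b using Quotient.inductionOn' with
    | h g =>
    erw [inducedMap, Quotient.map'_mk'', Quotient.map'_mk'', Quotient.eq''] at hab
    obtain ⟨H⟩ := hab
    set Φ : ↥(Sph k) × I → Y := fun p => H (p.2, p.1) with hΦ
    have hΦc : Continuous Φ := H.continuous.comp (by fun_prop)
    have hΦ0 : ∀ s, Φ (s, 0) = (f.1 s : Y) := fun s => H.apply_zero s
    have hΦ1 : ∀ s, Φ (s, 1) = (g.1 s : Y) := fun s => H.apply_one s
    have hΦb : ∀ t, Φ (basept k, t) = x₀ := by
      intro t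
      have := H.eq_fst t (x := basept k) rfl
      simpa [Φ, f.2] using this
    obtain ⟨G, hGc, hG0, hGbd, hG1⟩ := hyp₂ k Φ hΦc
      (fun s => by rw [hΦ0]; exact (f.1 s).2)
      (fun s => by rw [hΦ1]; exact (g.1 s).2)
      hΦb
    apply Quotient.sound'
    refine ⟨⟨⟨⟨fun p => ⟨G ((p.2, p.1), 1), hG1 _⟩, ?_⟩, ?_, ?_⟩, ?_⟩⟩
    · exact Continuous.subtype_mk (hGc.comp (by fun_prop)) _
    · intro s
      apply Subtype.ext
      simpa [hΦ0 s] using hGbd s 0 1 (Or.inl rfl)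
    · intro s
      apply Subtype.ext
      simpa [hΦ1 s] using hGbd s 1 1 (Or.inr (Or.inl rfl))
    · intro t s hs
      rw [Set.mem_singleton_iff] at hs
      subst hs
      apply Subtype.ext
      have h1 := hGbd (basept k) t 1 (Or.inr (Or.inr rfl))
      have h2 := hGbd (basept k) 0 1 (Or.inl rfl)
      show G ((basept k, t), 1) = (f.1 (basept k) : Y)
      rw [h1, hΦb t, f.2]
  · -- surjectivity
    intro q
    induction q using Quotient.inductionOn' with
    | h f =>
    obtain ⟨H, hHc, hH0, hHb, hH1⟩ := hyp₁ k f.1 f.1.continuous f.2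
    refine ⟨Quotient.mk'' ⟨⟨fun s => ⟨H (s, 1), hH1 s⟩, ?_⟩, ?_⟩, ?_⟩
    · exact Continuous.subtype_mk (hHc.comp (by fun_prop)) _
    · exact Subtype.ext (hHb 1)
    · erw [inducedMap, Quotient.map'_mk'']
      apply Quotient.sound'
      refine ⟨⟨⟨⟨fun p => H (p.2, σ p.1), ?_⟩, ?_, ?_⟩, ?_⟩⟩
      · exact hHc.comp (by fun_prop)
      · intro s; simp
      · intro s; simpa using hH0 s
      · intro t s hs
        rw [Set.mem_singleton_iff] at hs
        subst hs
        simp [hHb]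
end
end

section
/- Let M be a connected smooth m-dimensional manifold (without boundary) and let f : M → ℝⁿ be a smooth injective map such that for every point p ∈ M the image of the differential of f at p equals the fixed m-dimensional subspace P = span(e₁, …, eₘ) ⊆ ℝⁿ. Then M is diffeomorphic to an open subset of ℝᵐ. -/
open Manifold

open Set TopologicalSpace Function

noncomputable section

namespace TangentStraighten

variable {m n : ℕ}

/-- Projection onto the first `m` coordinates. -/
def projL (hmn : m ≤ n) : EuclideanSpace ℝ (Fin n) →L[ℝ] EuclideanSpace ℝ (Fin m) :=
  LinearMap.toContinuousLinearMap
    { toFun := fun x => (WithLp.toLp 2 (fun i => x (Fin.castLE hmn i)) : EuclideanSpace ℝ (Fin m))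
      map_add' := fun x y => rfl
      map_smul' := fun c x => rfl }

/-- Inclusion extending by zero. -/
def inclL (hmn : m ≤ n) : EuclideanSpace ℝ (Fin m) →L[ℝ] EuclideanSpace ℝ (Fin n) :=
  LinearMap.toContinuousLinearMap
    { toFun := fun y => (WithLp.toLp 2 (fun j : Fin n => if h : (j : ℕ) < m then y ⟨j, h⟩ else 0) : EuclideanSpace ℝ (Fin n))
      map_add' := fun x y => by
        ext j
        by_cases h : (j : ℕ) < m <;> simp [h] <;> rfl
      map_smul' := fun c x => by
        ext j
        by_cases h : (j : ℕ) < m <;> simp [h] <;> rfl }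

@[simp] lemma projL_apply (hmn : m ≤ n) (x : EuclideanSpace ℝ (Fin n)) (i : Fin m) :
    projL hmn x i = x (Fin.castLE hmn i) := rfl

@[simp] lemma inclL_apply (hmn : m ≤ n) (y : EuclideanSpace ℝ (Fin m)) (j : Fin n) :
    inclL hmn y j = if h : (j : ℕ) < m then y ⟨j, h⟩ else 0 := rfl

lemma projL_single (hmn : m ≤ n) (i : Fin m) :
    projL hmn (EuclideanSpace.single (Fin.castLE hmn i) (1 : ℝ)) = EuclideanSpace.single i 1 := by
  ext j
  simp [EuclideanSpace.single_apply, Fin.ext_iff]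

lemma inclL_single (hmn : m ≤ n) (i : Fin m) :
    inclL hmn (EuclideanSpace.single i (1 : ℝ)) = EuclideanSpace.single (Fin.castLE hmn i) 1 := by
  ext j
  by_cases h : (j : ℕ) < m
  · rw [inclL_apply, dif_pos h]
    rw [EuclideanSpace.single_apply, EuclideanSpace.single_apply]
    congr 1
    simp [Fin.ext_iff]
  · have h2 : ¬ j = Fin.castLE hmn i := by
      intro hji
      exact h (hji ▸ i.isLt)
    rw [inclL_apply, dif_neg h]
    rw [EuclideanSpace.single_apply, if_neg h2]

lemma span_single_top :
    Submodule.span ℝ (Set.range fun i : Fin m => EuclideanSpace.single i (1 : ℝ)) = ⊤ := by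
  have h1 := (EuclideanSpace.basisFun (Fin m) ℝ).toBasis.span_eq
  rw [OrthonormalBasis.coe_toBasis] at h1
  have h2 : ⇑(EuclideanSpace.basisFun (Fin m) ℝ) = fun i => EuclideanSpace.single i (1 : ℝ) :=
    funext fun i => EuclideanSpace.basisFun_apply _ _ i
  rwa [h2] at h1


/-- A smooth map with vanishing differential on a preconnected manifold is constant. -/
lemma const_of_mfderiv_zero {M : Type*} [TopologicalSpace M]
    [ChartedSpace (EuclideanSpace ℝ (Fin m)) M] [IsManifold (𝓡 m) (⊤ : ℕ∞) M]
    [PreconnectedSpace M] {V : Type*} [NormedAddCommGroup V] [NormedSpace ℝ V]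
    {h : M → V} (hsm : ContMDiff (𝓡 m) 𝓘(ℝ, V) (⊤ : ℕ∞) h)
    (hd : ∀ p, mfderiv (𝓡 m) 𝓘(ℝ, V) h p = 0) (p q : M) : h p = h q := by
  have hloc : IsLocallyConstant h := by
    rw [IsLocallyConstant.iff_exists_open]
    intro p
    set c := extChartAt (𝓡 m) p with hc
    have htarget : IsOpen c.target := isOpen_extChartAt_target p
    have hmem : c p ∈ c.target := mem_extChartAt_target p
    obtain ⟨ε, hε, hball⟩ := Metric.isOpen_iff.1 htarget _ hmem
    -- the function written in the chart has vanishing derivative on the ball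
    have key : ∀ y ∈ Metric.ball (c p) ε,
        HasFDerivWithinAt (h ∘ c.symm) (0 : EuclideanSpace ℝ (Fin m) →L[ℝ] V)
          (Metric.ball (c p) ε) y := by
      intro y hy
      have hyt : y ∈ c.target := hball hy
      have h1 : MDifferentiableWithinAt (𝓡 m) (𝓡 m) c.symm (Metric.ball (c p) ε) y := by
        have := mdifferentiableWithinAt_extChartAt_symm (I := 𝓡 m) (x := p) hyt
        exact this.mono (by simp)
      have h2 : HasMFDerivAt (𝓡 m) 𝓘(ℝ, V) h (c.symm y)
          (0 : TangentSpace (𝓡 m) (c.symm y) →L[ℝ] V) := by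
        have := ((hsm (c.symm y)).mdifferentiableAt (by simp)).hasMFDerivAt
        rwa [hd (c.symm y)] at this
      have h3 := h2.comp_hasMFDerivWithinAt y h1.hasMFDerivWithinAt
      erw [ContinuousLinearMap.zero_comp] at h3
      exact hasMFDerivWithinAt_iff_hasFDerivWithinAt.1 h3
    have hconst : ∀ y ∈ Metric.ball (c p) ε, (h ∘ c.symm) y = (h ∘ c.symm) (c p) := by
      intro y hy
      exact (convex_ball _ _).is_const_of_fderivWithin_eq_zero
        (fun z hz => (key z hz).differentiableWithinAt)
        (fun z hz => (key z hz).fderivWithin ((Metric.isOpen_ball).uniqueDiffWithinAt hz))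
        hy (Metric.mem_ball_self hε)
    refine ⟨c.source ∩ c ⁻¹' Metric.ball (c p) ε, ?_, ⟨mem_extChartAt_source p,
      by simp [Metric.mem_ball_self hε]⟩, ?_⟩
    · exact (continuousOn_extChartAt p).isOpen_inter_preimage (isOpen_extChartAt_source p)
        Metric.isOpen_ball
    · rintro q ⟨hq1, hq2⟩
      have := hconst (c q) hq2
      simp only [Function.comp] at this
      rw [c.left_inv hq1] at this
      rw [this, c.left_inv (mem_extChartAt_source p)]
  exact hloc.apply_eq_of_preconnectedSpace p q


lemma extChartAt_opens_apply {u : Opens (EuclideanSpace ℝ (Fin m))} (y z : u) :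
    extChartAt (𝓡 m) y z = (z : EuclideanSpace ℝ (Fin m)) := rfl

/-- A map into an open subset of the model space is smooth if it is smooth as a map to the
model space. -/
lemma contMDiffAt_codRestrict {M : Type*} [TopologicalSpace M]
    [ChartedSpace (EuclideanSpace ℝ (Fin m)) M]
    {u : Opens (EuclideanSpace ℝ (Fin m))} {f : M → u} {x : M}
    (hf : ContMDiffAt (𝓡 m) (𝓡 m) (⊤ : ℕ∞) (fun p => (f p : EuclideanSpace ℝ (Fin m))) x) :
    ContMDiffAt (𝓡 m) (𝓡 m) (⊤ : ℕ∞) f x := by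
  rw [contMDiffAt_iff] at hf ⊢
  refine ⟨?_, ?_⟩
  · exact hf.1.codRestrict _
  · exact hf.2

end TangentStraighten

open TangentStraighten

/-- If `f : M → ℝⁿ` is a smooth injective map from a connected smooth `m`-manifold
(without boundary) whose differential at every point has image equal to the fixed
subspace `P = span(e₁, …, eₘ) ⊆ ℝⁿ`, then `M` is diffeomorphic to an open subset
of `ℝᵐ`. -/
theorem diffeomorph_open_subset_of_straightened
    {m n : ℕ} (hmn : m ≤ n)
    {M : Type*} [TopologicalSpace M]
    [ChartedSpace (EuclideanSpace ℝ (Fin m)) M]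
    [IsManifold (𝓡 m) (⊤ : ℕ∞) M] [ConnectedSpace M]
    (f : M → EuclideanSpace ℝ (Fin n))
    (hf : ContMDiff (𝓡 m) (𝓡 n) (⊤ : ℕ∞) f)
    (hinj : Function.Injective f)
    (hder : ∀ p : M, LinearMap.range (mfderiv (𝓡 m) (𝓡 n) f p : TangentSpace (𝓡 m) p →ₗ[ℝ] TangentSpace (𝓡 n) (f p)) =
      Submodule.span ℝ (Set.range fun i : Fin m =>
        EuclideanSpace.single (Fin.castLE hmn i) (1 : ℝ))) :
    ∃ u : TopologicalSpace.Opens (EuclideanSpace ℝ (Fin m)),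
      Nonempty (Diffeomorph (𝓡 m) (𝓡 m) M u (⊤ : ℕ∞)) := by
  classical
  haveI : Nonempty M := inferInstance
  set π := projL hmn with hπ
  set ι := inclL hmn with hι
  set g : M → EuclideanSpace ℝ (Fin m) := fun p => π (f p) with hgdef
  -- smoothness of g
  have hg : ContMDiff (𝓡 m) (𝓡 m) (⊤ : ℕ∞) g := π.contMDiff.comp hf
  -- derivative of g
  have hgd : ∀ p : M, HasMFDerivAt (𝓡 m) (𝓡 m) g p
      (π.comp (mfderiv (𝓡 m) (𝓡 n) f p)) := by
    intro p
    exact π.hasMFDerivAt.comp p ((hf p).mdifferentiableAt (by simp)).hasMFDerivAt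
  -- the differential of g is surjective everywhere
  have hrange_g : ∀ p : M, LinearMap.range (mfderiv (𝓡 m) (𝓡 m) g p : TangentSpace (𝓡 m) p →ₗ[ℝ] TangentSpace (𝓡 m) (g p)) = ⊤ := by
    intro p
    rw [(hgd p).mfderiv]
    have hrc : LinearMap.range (π.comp (mfderiv (𝓡 m) (𝓡 n) f p) : TangentSpace (𝓡 m) p →ₗ[ℝ] EuclideanSpace ℝ (Fin m)) =
        Submodule.map π.toLinearMap (LinearMap.range (mfderiv (𝓡 m) (𝓡 n) f p : TangentSpace (𝓡 m) p →ₗ[ℝ] TangentSpace (𝓡 n) (f p))) :=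
      LinearMap.range_comp _ _
    refine hrc.trans ?_; refine (congrArg (Submodule.map π.toLinearMap) (hder p)).trans ?_; rw [Submodule.map_span]
    have : (π : EuclideanSpace ℝ (Fin n) →ₗ[ℝ] EuclideanSpace ℝ (Fin m)) ''
        (Set.range fun i : Fin m => EuclideanSpace.single (Fin.castLE hmn i) (1 : ℝ))
        = Set.range fun i : Fin m => EuclideanSpace.single i (1 : ℝ) := by
      rw [← Set.range_comp]
      refine congrArg _ (funext fun i => ?_)
      exact projL_single hmn i
    exact Eq.trans (congrArg (Submodule.span ℝ) this) span_single_top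
  -- injectivity of g
  have hginj : Function.Injective g := by
    set σ : EuclideanSpace ℝ (Fin n) →L[ℝ] EuclideanSpace ℝ (Fin n) :=
      ContinuousLinearMap.id ℝ _ - ι.comp π with hσ
    have hσP : ∀ v ∈ Submodule.span ℝ (Set.range fun i : Fin m =>
        EuclideanSpace.single (Fin.castLE hmn i) (1 : ℝ)), σ v = 0 := by
      intro v hv
      have hle : Submodule.span ℝ (Set.range fun i : Fin m =>
          EuclideanSpace.single (Fin.castLE hmn i) (1 : ℝ)) ≤
          LinearMap.ker (σ : EuclideanSpace ℝ (Fin n) →ₗ[ℝ] EuclideanSpace ℝ (Fin n)) := by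
        rw [Submodule.span_le]
        rintro - ⟨i, rfl⟩
        simp only [SetLike.mem_coe, LinearMap.mem_ker]
        show σ (EuclideanSpace.single (Fin.castLE hmn i) (1 : ℝ)) = 0
        rw [hσ]
        simp only [ContinuousLinearMap.sub_apply, ContinuousLinearMap.id_apply,
          ContinuousLinearMap.comp_apply]
        rw [projL_single hmn i, inclL_single hmn i, sub_self]
      exact hle hv
    set r : M → EuclideanSpace ℝ (Fin n) := fun p => σ (f p) with hrdef
    have hr : ContMDiff (𝓡 m) (𝓡 n) (⊤ : ℕ∞) r := σ.contMDiff.comp hf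
    have hrd : ∀ p : M, mfderiv (𝓡 m) (𝓡 n) r p = 0 := by
      intro p
      have h1 : HasMFDerivAt (𝓡 m) (𝓡 n) r p
          (σ.comp (mfderiv (𝓡 m) (𝓡 n) f p)) :=
        σ.hasMFDerivAt.comp p ((hf p).mdifferentiableAt (by simp)).hasMFDerivAt
      have h2 : σ.comp (mfderiv (𝓡 m) (𝓡 n) f p) = 0 := by
        apply ContinuousLinearMap.ext
        intro v
        have hv : mfderiv (𝓡 m) (𝓡 n) f p v ∈
            Submodule.span ℝ (Set.range fun i : Fin m =>
              EuclideanSpace.single (Fin.castLE hmn i) (1 : ℝ)) := by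
          rw [← hder p]
          exact LinearMap.mem_range_self _ v
        show σ (mfderiv (𝓡 m) (𝓡 n) f p v) = 0
        exact hσP _ hv
      rw [h1.mfderiv]
      exact h2
    have hrconst : ∀ p q : M, r p = r q :=
      const_of_mfderiv_zero hr hrd
    intro p q hpq
    apply hinj
    have hx : ∀ x : EuclideanSpace ℝ (Fin n), x = ι (π x) + σ x := by
      intro x
      rw [hσ]
      simp
    rw [hx (f p), hx (f q)]
    rw [show π (f p) = π (f q) from hpq]
    exact congrArg (fun z => ι (π (f q)) + z) (hrconst p q)
  have hleft : ∀ p : M, Function.invFun g (g p) = p :=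
    fun p => Function.leftInverse_invFun hginj p
  -- inverse function theorem data at each point
  have key : ∀ p : M, ∃ t : Set (EuclideanSpace ℝ (Fin m)),
      IsOpen t ∧ g p ∈ t ∧ t ⊆ Set.range g ∧
      ContMDiffAt (𝓡 m) (𝓡 m) (⊤ : ℕ∞) (Function.invFun g) (g p) := by
    intro p
    set c := extChartAt (𝓡 m) p with hc
    have hps : p ∈ c.source := mem_extChartAt_source p
    have hpt : c p ∈ c.target := mem_extChartAt_target p
    have htargetopen : IsOpen c.target := isOpen_extChartAt_target p
    set G : EuclideanSpace ℝ (Fin m) → EuclideanSpace ℝ (Fin m) := g ∘ c.symm with hGd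
    have hGp : G (c p) = g p := by
      show g (c.symm (c p)) = g p
      rw [c.left_inv hps]
    -- smoothness of `G` at `c p`
    have hsymm_sm : ContMDiffAt (𝓡 m) (𝓡 m) (⊤ : ℕ∞) c.symm (c p) :=
      (contMDiffOn_extChartAt_symm p).contMDiffAt (htargetopen.mem_nhds hpt)
    have hGsm : ContMDiffAt (𝓡 m) (𝓡 m) (⊤ : ℕ∞) G (c p) := by
      refine ContMDiffAt.comp (c p) ?_ hsymm_sm
      exact hg.contMDiffAt
    have hGcd := hGsm.contDiffAt
    -- derivative of the chart inverse
    have hBmd : MDifferentiableAt (𝓡 m) (𝓡 m) c.symm (c p) :=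
      hsymm_sm.mdifferentiableAt (by simp)
    set B := mfderiv (𝓡 m) (𝓡 m) c.symm (c p) with hBdef
    have hAB := mfderiv_extChartAt_comp_mfderivWithin_extChartAt_symm (I := 𝓡 m) (x := p) hpt
    have hBA := mfderivWithin_extChartAt_symm_comp_mfderiv_extChartAt (I := 𝓡 m) (x := p) hpt
    rw [ModelWithCorners.range_eq_univ, mfderivWithin_univ] at hAB hBA
    -- surjectivity of B
    have hBsurj : Function.Surjective B := by
      intro x
      refine ⟨mfderiv (𝓡 m) (𝓡 m) c ((extChartAt (𝓡 m) p).symm (c p)) x, ?_⟩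
      have := ContinuousLinearMap.ext_iff.1 hBA x
      exact this
    -- the derivative of G at c p
    have hD : HasMFDerivAt (𝓡 m) (𝓡 m) G (c p)
        ((mfderiv (𝓡 m) (𝓡 m) g (c.symm (c p))).comp B) := by
      have h1 : HasMFDerivAt (𝓡 m) (𝓡 m) c.symm (c p) B := hBmd.hasMFDerivAt
      have h2 : HasMFDerivAt (𝓡 m) (𝓡 m) g (c.symm (c p))
          (mfderiv (𝓡 m) (𝓡 m) g (c.symm (c p))) :=
        ((hg _).mdifferentiableAt (by simp)).hasMFDerivAt
      exact h2.comp (c p) h1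
    rw [c.left_inv hps] at hD
    have hDf : HasFDerivAt G ((mfderiv (𝓡 m) (𝓡 m) g p).comp B) (c p) :=
      hasMFDerivAt_iff_hasFDerivAt.1 hD
    -- bijectivity of the derivative
    have hgsurj : Function.Surjective (mfderiv (𝓡 m) (𝓡 m) g p) :=
      LinearMap.range_eq_top.1 (hrange_g p)
    have hDsurj : Function.Surjective ((mfderiv (𝓡 m) (𝓡 m) g p).comp B) := by
      show Function.Surjective (⇑(mfderiv (𝓡 m) (𝓡 m) g p) ∘ ⇑B)
      exact hgsurj.comp hBsurj
    have hDinj : Function.Injective ((mfderiv (𝓡 m) (𝓡 m) g p).comp B) := by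
      have := (LinearMap.injective_iff_surjective_of_finrank_eq_finrank
        (V := EuclideanSpace ℝ (Fin m)) (V₂ := EuclideanSpace ℝ (Fin m))
        (f := ((mfderiv (𝓡 m) (𝓡 m) g p).comp B :
          EuclideanSpace ℝ (Fin m) →L[ℝ] EuclideanSpace ℝ (Fin m)).toLinearMap) rfl)
      exact this.2 hDsurj
    set D : EuclideanSpace ℝ (Fin m) ≃L[ℝ] EuclideanSpace ℝ (Fin m) :=
      (LinearEquiv.ofBijective (M := EuclideanSpace ℝ (Fin m)) (M₂ := EuclideanSpace ℝ (Fin m))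
        (show EuclideanSpace ℝ (Fin m) →ₗ[ℝ] EuclideanSpace ℝ (Fin m) from ((mfderiv (𝓡 m) (𝓡 m) g p).comp B :
          EuclideanSpace ℝ (Fin m) →L[ℝ] EuclideanSpace ℝ (Fin m)).toLinearMap)
        ⟨hDinj, hDsurj⟩).toContinuousLinearEquiv with hDdef
    have hDcoe : (D : EuclideanSpace ℝ (Fin m) →L[ℝ] EuclideanSpace ℝ (Fin m)) =
        (mfderiv (𝓡 m) (𝓡 m) g p).comp B := by
      apply ContinuousLinearMap.ext
      intro v
      rfl
    have hDf' : HasFDerivAt G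
        (D : EuclideanSpace ℝ (Fin m) →L[ℝ] EuclideanSpace ℝ (Fin m)) (c p) := by
      rw [hDcoe]; exact hDf
    -- inverse function theorem
    have hone : ((⊤ : ℕ∞) : WithTop ℕ∞) ≠ 0 := by
      simp
    set Φ := hGcd.toOpenPartialHomeomorph G hDf' hone with hΦdef
    have hΦcoe : ⇑Φ = G := hGcd.toOpenPartialHomeomorph_coe hDf' hone
    have hsrc : c p ∈ Φ.source := hGcd.mem_toOpenPartialHomeomorph_source hDf' hone
    have htgt : g p ∈ Φ.target := by
      have := hGcd.image_mem_toOpenPartialHomeomorph_target hDf' hone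
      rwa [hGp] at this
    have hΦsymm_p : Φ.symm (g p) = c p := by
      have h5 : Φ (c p) = g p := by rw [hΦcoe]; exact hGp
      have h6 := Φ.left_inv hsrc
      rwa [h5] at h6
    -- target is inside the range of g
    have hsub : Φ.target ⊆ Set.range g := by
      intro y hy
      rw [← Φ.image_source_eq_target] at hy
      obtain ⟨w, -, rfl⟩ := hy
      rw [hΦcoe]
      exact ⟨c.symm w, rfl⟩
    -- smoothness of the local inverse
    have hsymm_cd : ContDiffAt ℝ ((⊤ : ℕ∞) : WithTop ℕ∞) Φ.symm (g p) := by
      refine Φ.contDiffAt_symm (f₀' := D) htgt ?_ ?_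
      · rw [hΦsymm_p]
        show HasFDerivAt Φ _ (c p)
        rw [hΦcoe]
        exact hDf'
      · rw [hΦsymm_p, hΦcoe]
        exact hGcd
    have hinner : ContMDiffAt (𝓡 m) (𝓡 m) (⊤ : ℕ∞) Φ.symm (g p) := hsymm_cd.contMDiffAt
    have houter : ContMDiffAt (𝓡 m) (𝓡 m) (⊤ : ℕ∞) c.symm (Φ.symm (g p)) := by
      rw [hΦsymm_p]; exact hsymm_sm
    have hcomp : ContMDiffAt (𝓡 m) (𝓡 m) (⊤ : ℕ∞) (c.symm ∘ Φ.symm) (g p) :=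
      ContMDiffAt.comp (g p) houter hinner
    have hev : Function.invFun g =ᶠ[nhds (g p)] (c.symm ∘ Φ.symm) := by
      filter_upwards [Φ.open_target.mem_nhds htgt] with z hz
      have h7 := Φ.right_inv hz
      rw [hΦcoe] at h7
      have h8 : g (c.symm (Φ.symm z)) = z := h7
      calc Function.invFun g z = Function.invFun g (g (c.symm (Φ.symm z))) := by rw [h8]
        _ = c.symm (Φ.symm z) := hleft _
    exact ⟨Φ.target, Φ.open_target, htgt, hsub, hcomp.congr_of_eventuallyEq hev⟩
  -- range of g is open
  have hopen : IsOpen (Set.range g) := by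
    rw [isOpen_iff_forall_mem_open]
    rintro - ⟨p, rfl⟩
    obtain ⟨t, h1, h2, h3, -⟩ := key p
    exact ⟨t, h3, h1, h2⟩
  refine ⟨⟨Set.range g, hopen⟩, ⟨?_⟩⟩
  exact {
    toFun := fun p => ⟨g p, Set.mem_range_self p⟩
    invFun := fun y => Function.invFun g (y : EuclideanSpace ℝ (Fin m))
    left_inv := hleft
    right_inv := by
      rintro ⟨-, p, rfl⟩
      exact Subtype.ext (congrArg g (hleft p))
    contMDiff_toFun := fun x => contMDiffAt_codRestrict (hg x)
    contMDiff_invFun := by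
      intro y
      have hy : ContMDiffAt (𝓡 m) (𝓡 m) (⊤ : ℕ∞) (Function.invFun g)
          ((y : EuclideanSpace ℝ (Fin m))) := by
        obtain ⟨p, hp⟩ := y.2
        obtain ⟨t, -, -, -, h4⟩ := key p
        rw [← hp]
        exact h4
      exact contMDiffAt_subtype_iff.mpr hy }
end
end
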